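/- For a constant a, define φ_{n−a}(x) = ((r_{1,n}−a)/(β(n−a))) log(1+s_{1,n} x) + ((r_{2,n}−a)/(β(n−a))) log(1−s_{2,n} x). Under Assumption A, for any L, M with −1/√γ < −L < M < 1/(√γσ), the functions φ_{n−a} converge uniformly on [−L, M] to φ_{γ,σ} as n → ∞. -/

import Mathlib

open MeasureTheory Filter Topology Real

noncomputable section

namespace BetaJacobiLDP

/-- The exponent `r_{i,n} = β (pᵢ − n + 1)/2`. -/
def rExp (β : ℝ) (n pi : ℕ) : ℝ := β * ((pi : ℝ) - (n : ℝ) + 1) / 2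

/-- The scaling constant `s_{i,n} = √(n p₁)/pᵢ`. -/
def sC (n p1 pi : ℕ) : ℝ := Real.sqrt ((n : ℝ) * (p1 : ℝ)) / (pi : ℝ)

/-- The unnormalized β-Jacobi density
`∏_{i<j} |x_i − x_j|^β ∏_i x_i^{r_{1,n}−1} (1−x_i)^{r_{2,n}−1}`. -/
def jDen (β : ℝ) (n p1 p2 : ℕ) (x : Fin n → ℝ) : ℝ :=
  (∏ i : Fin n, ∏ j : Fin n, if (i : ℕ) < (j : ℕ) then |x i - x j| ^ β else 1) *
    ∏ i : Fin n, (x i ^ (rExp β n p1 - 1) * (1 - x i) ^ (rExp β n p2 - 1))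

/-- The density restricted to `[0,1]^n`, as an `ℝ≥0∞`-valued function. -/
def jDenE (β : ℝ) (n p1 p2 : ℕ) : (Fin n → ℝ) → ENNReal :=
  (Set.univ.pi fun _ : Fin n => Set.Icc (0 : ℝ) 1).indicator
    fun x => ENNReal.ofReal (jDen β n p1 p2 x)

/-- The β-Jacobi ensemble `𝒥_n(p₁,p₂)`: the normalized measure with density `jDen`. -/
def jacobiMeasure (β : ℝ) (n p1 p2 : ℕ) : Measure (Fin n → ℝ) :=
  (∫⁻ x, jDenE β n p1 p2 x)⁻¹ • (volume.withDensity (jDenE β n p1 p2))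

/-- Probability of an event under the β-Jacobi ensemble. -/
def jProb (β : ℝ) (n p1 p2 : ℕ) (S : Set (Fin n → ℝ)) : ℝ :=
  (jacobiMeasure β n p1 p2 S).toReal

/-- The scaling map `t ↦ ((p₁+p₂) t − p₁)/√(n p₁)`. -/
def Xscale (n p1 p2 : ℕ) (t : ℝ) : ℝ :=
  (((p1 : ℝ) + (p2 : ℝ)) * t - (p1 : ℝ)) / Real.sqrt ((n : ℝ) * (p1 : ℝ))

/-- `X_{(n)}`, the largest of the scaled coordinates. -/
def Xmax (n p1 p2 : ℕ) (lam : Fin n → ℝ) : ℝ := ⨆ i, Xscale n p1 p2 (lam i)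

/-- `X_{(1)}`, the smallest of the scaled coordinates. -/
def Xmin (n p1 p2 : ℕ) (lam : Fin n → ℝ) : ℝ := ⨅ i, Xscale n p1 p2 (lam i)

/-- Assumption A of the paper: `p₁/p₂ → σ ≥ 0`, `n/p₁ → γ ∈ [0, 1 ∧ 1/σ)`,
`log n/(β n) → 0`, with `β > 0` and `p₁, p₂ ≥ n`. -/
structure AssumptionA (β : ℕ → ℝ) (p1 p2 : ℕ → ℕ) (γ σ : ℝ) : Prop where
  hβ : ∀ n, 0 < β n
  hp1 : ∀ n, n ≤ p1 n
  hp2 : ∀ n, n ≤ p2 n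
  hσ : 0 ≤ σ
  hγ0 : 0 ≤ γ
  hγ1 : γ < 1
  hγσ : γ * σ < 1
  limσ : Tendsto (fun n : ℕ => (p1 n : ℝ) / (p2 n : ℝ)) atTop (𝓝 σ)
  limγ : Tendsto (fun n : ℕ => (n : ℝ) / (p1 n : ℝ)) atTop (𝓝 γ)
  limlog : Tendsto (fun n : ℕ => Real.log n / (β n * n)) atTop (𝓝 0)

/-- `ũ₂ = ((1−σ)√γ + 2√(1+σ−σγ))/(1+σ)`. -/
def u2t (γ σ : ℝ) : ℝ := ((1 - σ) * Real.sqrt γ + 2 * Real.sqrt (1 + σ - σ * γ)) / (1 + σ)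

/-- `ũ₁ = ((1−σ)√γ − 2√(1+σ−σγ))/(1+σ)`. -/
def u1t (γ σ : ℝ) : ℝ := ((1 - σ) * Real.sqrt γ - 2 * Real.sqrt (1 + σ - σ * γ)) / (1 + σ)

/-- The semicircle density `c₂`. -/
def semicircle (x : ℝ) : ℝ := if |x| ≤ 2 then Real.sqrt (4 - x ^ 2) / (2 * π) else 0

/-- The Marchenko–Pastur density `h_γ`. -/
def mpDen (γ x : ℝ) : ℝ :=
  if (Real.sqrt γ - 1) ^ 2 ≤ x ∧ x ≤ (Real.sqrt γ + 1) ^ 2 then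
    Real.sqrt ((x - (Real.sqrt γ - 1) ^ 2) * ((Real.sqrt γ + 1) ^ 2 - x)) / (2 * π * γ * x)
  else 0

/-- Left edge `u₁` of the Wachter law. -/
def wU1 (γ σ : ℝ) : ℝ :=
  σ / (1 + σ) * (Real.sqrt (1 - σ * γ / (1 + σ)) - Real.sqrt (γ / (1 + σ))) ^ 2

/-- Right edge `u₂` of the Wachter law. -/
def wU2 (γ σ : ℝ) : ℝ :=
  σ / (1 + σ) * (Real.sqrt (1 - σ * γ / (1 + σ)) + Real.sqrt (γ / (1 + σ))) ^ 2

/-- The Wachter density `h_{γ,σ}`. -/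
def wachterDen (γ σ x : ℝ) : ℝ :=
  if wU1 γ σ ≤ x ∧ x ≤ wU2 γ σ then
    (1 + σ) / (2 * π * σ * γ) * Real.sqrt ((x - wU1 γ σ) * (wU2 γ σ - x)) / (x * (1 - x))
  else 0

/-- The density of the limit law `ν̃_{γ,σ}`. -/
def nuDen (γ σ x : ℝ) : ℝ :=
  if 0 < σ * γ then
    σ * Real.sqrt γ / (1 + σ) * wachterDen γ σ (σ / (1 + σ) * (1 + Real.sqrt γ * x))
  else if 0 < γ then Real.sqrt γ * mpDen γ (1 + Real.sqrt γ * x)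
  else Real.sqrt (1 + σ) * semicircle (Real.sqrt (1 + σ) * x)

/-- The logarithmic potential `∫ log|x−y| ν̃_{γ,σ}(dy)`. -/
def logPot (γ σ x : ℝ) : ℝ := ∫ y : ℝ, Real.log |x - y| * nuDen γ σ y

/-- The function `φ_{γ,σ}`. -/
def phiLim (γ σ x : ℝ) : ℝ :=
  if 0 < σ * γ then
    (1 - γ) / (2 * γ) * Real.log (1 + Real.sqrt γ * x) +
      (1 - γ * σ) / (2 * γ * σ) * Real.log (1 - Real.sqrt γ * σ * x)
  else if 0 < γ then (1 - γ) / (2 * γ) * Real.log (1 + Real.sqrt γ * x) - x / (2 * Real.sqrt γ)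
  else -(1 + σ) * x ^ 2 / 4

/-- The constant `z_{γ,σ}`. -/
def zConst (γ σ : ℝ) : ℝ :=
  if 0 < σ * γ then
    Real.log (1 + σ) / 2 + (1 + σ - γ * σ) / (2 * γ * σ) * Real.log (1 + γ * σ / (1 + σ - γ * σ))
  else if 0 < γ then 1 / 2
  else Real.log (1 + σ) / 2 + 1 / 2

open Classical in
/-- The rate function `J_{γ,σ}` of `X_{(n)}`, with value `+∞` outside `[ũ₂, 1/(√γ σ))`
(the right endpoint being `+∞` when `γσ = 0`). -/
def Jrate (γ σ : ℝ) (x : ℝ) : EReal :=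
  if u2t γ σ ≤ x ∧ (0 < γ * σ → x < 1 / (Real.sqrt γ * σ)) then
    ((-zConst γ σ - logPot γ σ x - phiLim γ σ x : ℝ) : EReal)
  else ⊤

open Classical in
/-- The rate function `I_{γ,σ}` of `X_{(1)}`, with value `+∞` outside `(−1/√γ, ũ₁]`
(the left endpoint being `−∞` when `γ = 0`). -/
def Irate (γ σ : ℝ) (x : ℝ) : EReal :=
  if x ≤ u1t γ σ ∧ (0 < γ → -(1 / Real.sqrt γ) < x) then
    ((-zConst γ σ - logPot γ σ x - phiLim γ σ x : ℝ) : EReal)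
  else ⊤

/-- `κ = γσ` if `0 < σγ < 1`, and `κ = (1+σ)/2` if `σγ = 0`. -/
def kap (γ σ : ℝ) : ℝ := if 0 < σ * γ then γ * σ else (1 + σ) / 2

/-- `J'_{γ,σ}(x) = κ √((x−ũ₁)(x−ũ₂)) / ((1+√γ x)(1−σ√γ x))` on `(ũ₂, 1/(√γσ))`. -/
def Dfun (γ σ x : ℝ) : ℝ :=
  kap γ σ * Real.sqrt ((x - u1t γ σ) * (x - u2t γ σ)) /
    ((1 + Real.sqrt γ * x) * (1 - σ * Real.sqrt γ * x))

/-- `|I'_{γ,σ}(x)| = κ √((ũ₁−x)(ũ₂−x)) / ((1+√γ x)(1−σ√γ x))` on `(−1/√γ, ũ₁)`. -/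
def DfunLow (γ σ x : ℝ) : ℝ :=
  kap γ σ * Real.sqrt ((u1t γ σ - x) * (u2t γ σ - x)) /
    ((1 + Real.sqrt γ * x) * (1 - σ * Real.sqrt γ * x))

/-- `u_n(x) = (1+s_{1,n}x)^{r_{1,n}−1}(1−s_{2,n}x)^{r_{2,n}−1}`. -/
def uFun (β : ℝ) (n p1 p2 : ℕ) (x : ℝ) : ℝ :=
  (1 + sC n p1 p1 * x) ^ (rExp β n p1 - 1) * (1 - sC n p1 p2 * x) ^ (rExp β n p2 - 1)

/-- The ratio `C_n^{p₁,p₂}/C_{n−1}^{p₁−1,p₂−1}` expressed through Gamma functions. -/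
def cRatio (β : ℝ) (n p1 p2 : ℕ) : ℝ :=
  Real.Gamma (1 + β / 2) * Real.Gamma (β * ((p1 : ℝ) + (p2 : ℝ)) / 2) *
      Real.Gamma (β * ((p1 : ℝ) + (p2 : ℝ) - 1) / 2) /
    (Real.Gamma (1 + β * n / 2) * Real.Gamma (β * (p1 : ℝ) / 2) * Real.Gamma (β * (p2 : ℝ) / 2) *
      Real.Gamma (β * ((p1 : ℝ) + (p2 : ℝ) - (n : ℝ)) / 2))

/-- The normalizing constant `B_n`. -/
def Bfun (β : ℝ) (n p1 p2 : ℕ) : ℝ :=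
  (n : ℝ) * (sC n p1 p1 / (sC n p1 p1 + sC n p1 p2)) ^ (β * ((n : ℝ) - 1) + rExp β n p2) *
    (sC n p1 p2 / (sC n p1 p1 + sC n p1 p2)) ^ (β * ((n : ℝ) - 1) + rExp β n p1) *
    cRatio β n p1 p2

/-- The monotone (increasing) rearrangement of a tuple. -/
def ordStat {n : ℕ} (x : Fin n → ℝ) : Fin n → ℝ := fun i => x (Tuple.sort x i)

/-- The `k`-th smallest of the scaled coordinates (`k = 0, …, n−1`); in particular
`XsortTop n p1 p2 lam (n-1) = X_{(n)}` and `XsortTop n p1 p2 lam 0 = X_{(1)}`. -/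
def XsortTop (n p1 p2 : ℕ) (lam : Fin n → ℝ) (k : ℕ) : ℝ :=
  if h : k < n then ordStat (fun i => Xscale n p1 p2 (lam i)) ⟨k, h⟩ else 0

/-- `∏_{i=1}^{n-1} (X_{(n)} − X_{(i)})^β`. -/
def prodGapTop (β : ℝ) (n p1 p2 : ℕ) (lam : Fin n → ℝ) : ℝ :=
  ∏ i : Fin n,
    if (i : ℕ) < n - 1 then (XsortTop n p1 p2 lam (n - 1) - XsortTop n p1 p2 lam i) ^ β else 1

/-- `∏_{i=2}^{n} (X_{(i)} − X_{(1)})^β`. -/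
def prodGapBot (β : ℝ) (n p1 p2 : ℕ) (lam : Fin n → ℝ) : ℝ :=
  ∏ i : Fin n,
    if 0 < (i : ℕ) then (XsortTop n p1 p2 lam i - XsortTop n p1 p2 lam 0) ^ β else 1

/-- The reciprocal `h_w(y)⁻¹` of the truncated-exponential density
`h_w(y) = r e^{−r(y−max(x,w))}/(1−e^{−r(p₂/√(n p₁) − max(x,w))})`. -/
def hInvTop (r x w : ℝ) (n p1 p2 : ℕ) (y : ℝ) : ℝ :=
  (1 - Real.exp (-(r * ((p2 : ℝ) / Real.sqrt ((n : ℝ) * (p1 : ℝ)) - max x w)))) / r *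
    Real.exp (r * (y - max x w))

/-- The reciprocal `ĥ_w(y)⁻¹` of the truncated-exponential density
`ĥ_w(y) = r e^{r(y−min(x,w))}/(1−e^{−r(√(p₁/n) + min(x,w))})`. -/
def hInvBot (r x w : ℝ) (n p1 : ℕ) (y : ℝ) : ℝ :=
  (1 - Real.exp (-(r * (Real.sqrt ((p1 : ℝ) / (n : ℝ)) + min x w)))) / r *
    Real.exp (-(r * (y - min x w)))

open Classical in
/-- The integrand `B_n u_n(X_{(n)}) h_{X_{(n−1)}}(X_{(n)})⁻¹ ∏_{i<n}(X_{(n)}−X_{(i)})^β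
𝟙{X_{(n)} > max(x, X_{(n−1)})}`. -/
def isIntegrandTop (β r x : ℝ) (n p1 p2 : ℕ) (lam : Fin n → ℝ) : ℝ :=
  Bfun β n p1 p2 * uFun β n p1 p2 (XsortTop n p1 p2 lam (n - 1)) *
    hInvTop r x (XsortTop n p1 p2 lam (n - 2)) n p1 p2 (XsortTop n p1 p2 lam (n - 1)) *
    prodGapTop β n p1 p2 lam *
    (if max x (XsortTop n p1 p2 lam (n - 2)) < XsortTop n p1 p2 lam (n - 1) then 1 else 0)

/-- The second moment `E^R[F_n²]` of the importance sampling estimator of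
`P(X_{(n)} > x)`. -/
def secondMomTop (β r x : ℝ) (n p1 p2 : ℕ) : ℝ :=
  ∫ lam, isIntegrandTop β r x n p1 p2 lam ∂(jacobiMeasure β n p1 p2)

open Classical in
/-- As `isIntegrandTop`, with the additional restriction `X_{(n)} > M`. -/
def isIntegrandTopM (β r x M : ℝ) (n p1 p2 : ℕ) (lam : Fin n → ℝ) : ℝ :=
  Bfun β n p1 p2 * uFun β n p1 p2 (XsortTop n p1 p2 lam (n - 1)) *
    hInvTop r x (XsortTop n p1 p2 lam (n - 2)) n p1 p2 (XsortTop n p1 p2 lam (n - 1)) *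
    prodGapTop β n p1 p2 lam *
    (if max x (XsortTop n p1 p2 lam (n - 2)) < XsortTop n p1 p2 lam (n - 1) ∧
        M < XsortTop n p1 p2 lam (n - 1) then 1 else 0)

/-- `A_n(M)`, the contribution of `{X_{(n)} > M}` to the second moment. -/
def secondMomTopM (β r x M : ℝ) (n p1 p2 : ℕ) : ℝ :=
  ∫ lam, isIntegrandTopM β r x M n p1 p2 lam ∂(jacobiMeasure β n p1 p2)

open Classical in
/-- The integrand `B_n u_n(X_{(1)}) ĥ_{X_{(2)}}(X_{(1)})⁻¹ ∏_{i≥2}(X_{(i)}−X_{(1)})^β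
𝟙{X_{(1)} < min(x, X_{(2)})}`. -/
def isIntegrandBot (β r x : ℝ) (n p1 p2 : ℕ) (lam : Fin n → ℝ) : ℝ :=
  Bfun β n p1 p2 * uFun β n p1 p2 (XsortTop n p1 p2 lam 0) *
    hInvBot r x (XsortTop n p1 p2 lam 1) n p1 (XsortTop n p1 p2 lam 0) *
    prodGapBot β n p1 p2 lam *
    (if XsortTop n p1 p2 lam 0 < min x (XsortTop n p1 p2 lam 1) then 1 else 0)

/-- The second moment `E^T[G_n²]` of the importance sampling estimator of
`P(X_{(1)} < x)`. -/
def secondMomBot (β r x : ℝ) (n p1 p2 : ℕ) : ℝ :=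
  ∫ lam, isIntegrandBot β r x n p1 p2 lam ∂(jacobiMeasure β n p1 p2)

/-- `φ_{n−a}(x)`. -/
def phiN (β : ℝ) (n p1 p2 : ℕ) (a x : ℝ) : ℝ :=
  (rExp β n p1 - a) / (β * ((n : ℝ) - a)) * Real.log (1 + sC n p1 p1 * x) +
    (rExp β n p2 - a) / (β * ((n : ℝ) - a)) * Real.log (1 - sC n p1 p2 * x)

/-- The law `Q_{n−1}^{p₁−1,p₂−1}` of the order statistics of the scaled
`β`-Jacobi ensemble `𝒥_{n−1}(p₁−1,p₂−1)`. -/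
def Qlaw (β : ℝ) (n p1 p2 : ℕ) : Measure (Fin (n - 1) → ℝ) :=
  Measure.map (fun lam => ordStat fun i => Xscale n p1 p2 (lam i))
    (jacobiMeasure β (n - 1) (p1 - 1) (p2 - 1))

/-- The simplex `Δ_{n−1} = {−1/s_{1,n} ≤ x₁ ≤ … ≤ x_{n−1} ≤ 1/s_{2,n}}`. -/
def deltaSet (n p1 p2 : ℕ) : Set (Fin (n - 1) → ℝ) :=
  {y | (∀ i j : Fin (n - 1), i ≤ j → y i ≤ y j) ∧
    ∀ i, -(1 / sC n p1 p1) ≤ y i ∧ y i ≤ 1 / sC n p1 p2}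


/-! ### Auxiliary material for Lemma 5.1 -/

/-- `auxF t x = (log(1+tx) - tx)/t²`, extended by `-x²/2` at `t = 0`. -/
def auxF (t x : ℝ) : ℝ := if t = 0 then -x^2/2 else (Real.log (1+t*x) - t*x)/t^2

lemma auxF_zero (x : ℝ) : auxF 0 x = -x^2/2 := if_pos rfl

lemma auxF_ne {t : ℝ} (ht : t ≠ 0) (x : ℝ) :
    auxF t x = (Real.log (1+t*x) - t*x)/t^2 := if_neg ht

lemma auxF_err {t x : ℝ} (h : |t*x| ≤ 1/2) : |auxF t x + x^2/2| ≤ 2 * |t| * |x| ^ 3 := by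
  by_cases ht : t = 0
  · subst ht
    simp only [auxF_zero, abs_zero]
    have : -x^2/2 + x^2/2 = 0 := by ring
    rw [this, abs_zero]
    positivity
  · have h1 : |(-(t*x))| < 1 := by rw [abs_neg]; linarith [h]
    have key := Real.abs_log_sub_add_sum_range_le h1 2
    have hsum : (∑ i ∈ Finset.range 2, (-(t*x)) ^ (i+1) / ((i:ℝ)+1)) = -(t*x) + (t*x)^2/2 := by
      simp [Finset.sum_range_succ]
      ring
    rw [hsum, abs_neg, sub_neg_eq_add] at key
    have hhalf : (1:ℝ)/2 ≤ 1 - |t*x| := by linarith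
    have habs : (0:ℝ) ≤ |t*x|^3 := by positivity
    have key2 : |(-(t*x) + (t*x)^2/2) + Real.log (1+t*x)| ≤ 2 * |t*x| ^ 3 := by
      refine key.trans ?_
      calc |t*x| ^ (2+1) / (1 - |t*x|) ≤ |t*x| ^ (2+1) / (1/2) := by
            apply div_le_div_of_nonneg_left habs (by norm_num) hhalf
        _ = 2 * |t*x| ^ 3 := by ring
    rw [auxF_ne ht]
    have ht2 : (0:ℝ) < t^2 := by positivity
    have heq : (Real.log (1+t*x) - t*x)/t^2 + x^2/2
        = ((-(t*x) + (t*x)^2/2) + Real.log (1+t*x))/t^2 := by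
      field_simp
      ring
    rw [heq, abs_div, abs_of_pos ht2, div_le_iff₀ ht2]
    refine key2.trans_eq ?_
    rw [abs_mul, mul_pow, ← sq_abs t]
    ring
  
lemma auxF_continuousOn :
    ContinuousOn (fun p : ℝ × ℝ => auxF p.1 p.2) {p : ℝ × ℝ | 0 < 1 + p.1 * p.2} := by
  intro p hp
  apply ContinuousAt.continuousWithinAt
  obtain ⟨t0, x0⟩ := p
  simp only [Set.mem_setOf_eq] at hp
  by_cases ht : t0 = 0
  · subst ht
    have hmul : Tendsto (fun q : ℝ×ℝ => q.1 * q.2) (𝓝 ((0:ℝ), x0)) (𝓝 0) := by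
      have := (continuous_fst.mul continuous_snd).tendsto ((0:ℝ), x0)
      convert this using 2 <;> simp
    have hev : ∀ᶠ q : ℝ×ℝ in 𝓝 ((0:ℝ), x0), q.1*q.2 ∈ Set.Ioo (-(1/2) : ℝ) (1/2) :=
      hmul (Ioo_mem_nhds (by norm_num) (by norm_num))
    have h2 : Tendsto (fun q : ℝ×ℝ => auxF q.1 q.2 + q.2^2/2) (𝓝 ((0:ℝ),x0)) (𝓝 0) := by
      refine squeeze_zero_norm' (a := fun q : ℝ×ℝ => 2 * |q.1| * |q.2| ^ 3) ?_ ?_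
      · filter_upwards [hev] with q hq
        rw [Real.norm_eq_abs]
        exact auxF_err (le_of_lt (abs_lt.2 ⟨hq.1, hq.2⟩))
      · have hc : Continuous (fun q : ℝ×ℝ => 2 * |q.1| * |q.2| ^ 3) := by fun_prop
        have := hc.tendsto ((0:ℝ),x0)
        simpa using this
    have h1 : Tendsto (fun q : ℝ×ℝ => -q.2^2/2) (𝓝 ((0:ℝ),x0)) (𝓝 (-x0^2/2)) := by
      have hc : Continuous (fun q : ℝ×ℝ => -q.2^2/2) := by fun_prop
      exact hc.tendsto _
    have h3 := h1.add h2
    rw [add_zero] at h3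
    have : (fun q : ℝ×ℝ => -q.2^2/2 + (auxF q.1 q.2 + q.2^2/2))
        = fun q : ℝ×ℝ => auxF q.1 q.2 := by
      funext q; ring
    rw [this] at h3
    simpa [ContinuousAt, auxF_zero] using h3
  · have hca : ContinuousAt (fun q : ℝ×ℝ => (Real.log (1 + q.1*q.2) - q.1*q.2)/q.1^2)
        (t0, x0) := by
      apply ContinuousAt.div
      · apply ContinuousAt.sub
        · exact (Real.continuousAt_log (by simpa using (ne_of_gt hp))).comp
            ((continuous_const.add (continuous_fst.mul continuous_snd)).continuousAt)
        · exact (continuous_fst.mul continuous_snd).continuousAt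
      · exact (continuous_fst.pow 2).continuousAt
      · exact pow_ne_zero 2 ht
    apply hca.congr
    have hopen : {q : ℝ×ℝ | q.1 ≠ 0} ∈ 𝓝 ((t0, x0) : ℝ×ℝ) :=
      (isOpen_compl_singleton.preimage continuous_fst).mem_nhds ht
    exact Filter.eventually_of_mem hopen (fun q hq => (auxF_ne hq q.2).symm)

/-- Uniform convergence of a continuous function of a converging parameter. -/
lemma tendstoUniformlyOn_param {E : Type*} [MetricSpace E] [ProperSpace E]
    {g : E × ℝ → ℝ} {U : Set (E × ℝ)} (hU : IsOpen U) (hg : ContinuousOn g U)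
    {v : ℕ → E} {c : E} (hv : Tendsto v atTop (𝓝 c)) {K : Set ℝ} (hK : IsCompact K)
    (hsub : ∀ x ∈ K, (c, x) ∈ U) :
    TendstoUniformlyOn (fun n x => g (v n, x)) (fun x => g (c, x)) atTop K := by
  have hS : IsCompact (({c} : Set E) ×ˢ K) := isCompact_singleton.prod hK
  have hSU : ({c} : Set E) ×ˢ K ⊆ U := by
    rintro ⟨e, x⟩ ⟨he, hx⟩
    rw [Set.mem_singleton_iff] at he
    subst he
    exact hsub x hx
  obtain ⟨δ, hδ, hthick⟩ := hS.exists_thickening_subset_open hU hSU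
  have hTc : IsCompact (Metric.cthickening (δ/2) (({c} : Set E) ×ˢ K)) := hS.cthickening
  have hTU : Metric.cthickening (δ/2) (({c} : Set E) ×ˢ K) ⊆ U :=
    (Metric.cthickening_subset_thickening' hδ (by linarith) _).trans hthick
  have hgu : UniformContinuousOn g (Metric.cthickening (δ/2) (({c} : Set E) ×ˢ K)) :=
    hTc.uniformContinuousOn_of_continuous (hg.mono hTU)
  rw [Metric.tendstoUniformlyOn_iff]
  intro ε hε
  rw [Metric.uniformContinuousOn_iff] at hgu
  obtain ⟨δ', hδ', hδ'mp⟩ := hgu ε hε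
  have hev : ∀ᶠ n in atTop, dist (v n) c < min δ' (δ/2) :=
    hv (Metric.ball_mem_nhds c (lt_min hδ' (by linarith)))
  filter_upwards [hev] with n hn x hx
  have hmem1 : ((c, x) : E × ℝ) ∈ Metric.cthickening (δ/2) (({c} : Set E) ×ˢ K) :=
    Metric.self_subset_cthickening _ (Set.mk_mem_prod (Set.mem_singleton c) hx)
  have hd : dist ((v n, x) : E × ℝ) (c, x) = dist (v n) c := by
    rw [Prod.dist_eq]
    simp [dist_nonneg]
  have hmem2 : ((v n, x) : E × ℝ) ∈ Metric.cthickening (δ/2) (({c} : Set E) ×ˢ K) := by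
    apply Metric.mem_cthickening_of_dist_le _ ((c, x) : E × ℝ) _ _ (Set.mk_mem_prod (Set.mem_singleton c) hx)
    rw [hd]
    exact le_of_lt (lt_of_lt_of_le hn (min_le_right _ _))
  have hfin := hδ'mp _ hmem2 _ hmem1 (by rw [hd]; exact lt_of_lt_of_le hn (min_le_left _ _))
  rwa [dist_comm] at hfin

set_option maxHeartbeats 1000000 in
lemma aux_keyB1 (b P nn aa : ℝ) (hb : b ≠ 0) (hP : P ≠ 0) (hna : nn - aa ≠ 0) :
    (b*(P - nn + 1)/2 - aa)/(b*(nn - aa)) * (nn/P)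
      = ((1 - nn/P + 1/P)/2) * (nn/(nn - aa)) - aa*(nn/P)*(b*(nn - aa))⁻¹ := by
  field_simp

set_option maxHeartbeats 1000000 in
lemma aux_keyB2 (b P1 P2 nn aa : ℝ) (hb : b ≠ 0) (hP1 : P1 ≠ 0) (hP2 : P2 ≠ 0)
    (hna : nn - aa ≠ 0) :
    (b*(P2 - nn + 1)/2 - aa)/(b*(nn - aa)) * (nn*P1/P2^2)
      = ((1 - (nn/P1)*(P1/P2) + 1/P2)*(P1/P2)/2) * (nn/(nn - aa))
        - aa*(nn/P1)*(P1/P2)^2*(b*(nn - aa))⁻¹ := by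
  field_simp

set_option maxHeartbeats 1000000 in
lemma aux_key (b P1 P2 nn aa : ℝ) (hb : b ≠ 0) (hP2 : P2 ≠ 0) (hna : nn - aa ≠ 0) :
    (b*(P1 - nn + 1)/2 - aa)/(b*(nn - aa)) - (b*(P2 - nn + 1)/2 - aa)/(b*(nn - aa)) * (P1/P2)
      = ((nn-1)/(nn - aa)) * ((P1/P2 - 1)/2) - aa*(1 - P1/P2)*(b*(nn - aa))⁻¹ := by
  field_simp
  ring

lemma log_decomp (c1 c2 s1 s2 x : ℝ) (h1 : s1 ≠ 0) (h2 : s2 ≠ 0) :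
    c1 * Real.log (1 + s1*x) + c2 * Real.log (1 - s2*x) =
      (c1*s1 - c2*s2)*x + (c1*s1^2) * auxF s1 x + (c2*s2^2) * auxF (-s2) x := by
  rw [auxF_ne h1, auxF_ne (neg_ne_zero.mpr h2)]
  have e1 : (1:ℝ) + -s2*x = 1 - s2*x := by ring
  rw [e1]
  field_simp
  ring

lemma phiLim_eq_decomp (γ σ : ℝ) (hγ : 0 ≤ γ) (hσ : 0 ≤ σ) (x : ℝ) :
    phiLim γ σ x = (Real.sqrt γ * (σ-1)/2) * x + ((1-γ)/2) * auxF (Real.sqrt γ) x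
      + (σ*(1-γ*σ)/2) * auxF (-(Real.sqrt γ * σ)) x := by
  unfold phiLim
  by_cases h1 : 0 < σ * γ
  · rw [if_pos h1]
    have hγ0 : 0 < γ := by
      rcases hγ.lt_or_eq with h | h
      · exact h
      · exfalso; rw [← h] at h1; simp at h1
    have hσ0 : 0 < σ := by
      rcases hσ.lt_or_eq with h | h
      · exact h
      · exfalso; rw [← h] at h1; simp at h1
    have hg : 0 < Real.sqrt γ := Real.sqrt_pos.2 hγ0
    rw [auxF_ne hg.ne', auxF_ne (neg_ne_zero.mpr (by positivity))]
    have e1 : (1:ℝ) + -(Real.sqrt γ * σ)*x = 1 - Real.sqrt γ * σ * x := by ring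
    rw [e1]
    set g := Real.sqrt γ with hgdef
    have hgsq : g ^ 2 = γ := Real.sq_sqrt hγ
    rw [← hgsq]
    have hgne : g ≠ 0 := hg.ne'
    field_simp
    ring
  · rw [if_neg h1]
    by_cases h2 : 0 < γ
    · rw [if_pos h2]
      have hσ0 : σ = 0 := by nlinarith [mul_nonneg hσ hγ]
      subst hσ0
      have hg : 0 < Real.sqrt γ := Real.sqrt_pos.2 h2
      rw [auxF_ne hg.ne']
      set g := Real.sqrt γ with hgdef
      have hgsq : g ^ 2 = γ := Real.sq_sqrt hγ
      rw [← hgsq]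
      have hgne : g ≠ 0 := hg.ne'
      simp only [mul_zero, neg_zero, zero_mul]
      field_simp
      ring
    · have hγ0 : γ = 0 := le_antisymm (not_lt.1 h2) hγ
      subst hγ0
      rw [if_neg h2]
      simp only [Real.sqrt_zero, zero_mul, neg_zero, auxF_zero, mul_zero]
      ring

/-- The parametric form of the decomposed `φ`-functions. -/
def auxG (q : (ℝ×ℝ×ℝ×ℝ×ℝ) × ℝ) : ℝ :=
  q.1.1*q.2 + q.1.2.1 * auxF q.1.2.2.2.1 q.2 + q.1.2.2.1 * auxF (-q.1.2.2.2.2) q.2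

/-- The domain of continuity of `auxG`. -/
def auxU : Set ((ℝ×ℝ×ℝ×ℝ×ℝ) × ℝ) :=
  {q | 0 < 1 + q.1.2.2.2.1*q.2} ∩ {q | 0 < 1 - q.1.2.2.2.2*q.2}

lemma auxU_open : IsOpen auxU :=
  IsOpen.inter (isOpen_lt continuous_const (by fun_prop))
    (isOpen_lt continuous_const (by fun_prop))

lemma auxG_continuousOn : ContinuousOn auxG auxU := by
  apply ContinuousOn.add
  apply ContinuousOn.add
  · exact (Continuous.continuousOn (by fun_prop))
  · apply ContinuousOn.mul (Continuous.continuousOn (by fun_prop))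
    exact auxF_continuousOn.comp
      (Continuous.continuousOn (by fun_prop : Continuous fun q : (ℝ×ℝ×ℝ×ℝ×ℝ) × ℝ =>
        ((q.1.2.2.2.1, q.2) : ℝ × ℝ)))
      (fun q hq => hq.1)
  · apply ContinuousOn.mul (Continuous.continuousOn (by fun_prop))
    apply auxF_continuousOn.comp
      (Continuous.continuousOn (by fun_prop : Continuous fun q : (ℝ×ℝ×ℝ×ℝ×ℝ) × ℝ =>
        ((-q.1.2.2.2.2, q.2) : ℝ × ℝ)))
    intro q hq
    have := hq.2
    simp only [Set.mem_setOf_eq] at this ⊢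
    nlinarith

/-- Lemma 5.1 (phix): for any constant `a`, under Assumption A the functions
`φ_{n−a}(x) = ((r_{1,n}−a)/(β(n−a))) log(1+s_{1,n}x) + ((r_{2,n}−a)/(β(n−a))) log(1−s_{2,n}x)`
converge uniformly to `φ_{γ,σ}` on `[−L, M]` whenever `−1/√γ < −L < M < 1/(√γσ)`. -/
theorem phiN_tendstoUniformlyOn (β : ℕ → ℝ) (p1 p2 : ℕ → ℕ) (γ σ : ℝ)
    (hA : AssumptionA β p1 p2 γ σ) (a L M : ℝ)
    (hL : 0 < γ → -(1 / Real.sqrt γ) < -L) (hLM : -L < M)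
    (hM : 0 < γ * σ → M < 1 / (Real.sqrt γ * σ)) :
    TendstoUniformlyOn (fun (n : ℕ) (x : ℝ) => phiN (β n) n (p1 n) (p2 n) a x)
      (phiLim γ σ) atTop (Set.Icc (-L) M) := by
  obtain ⟨hβ, hp1, hp2, hσ, hγ0, hγ1, hγσ, limσ, limγ, limlog⟩ := hA
  have ht1nn : 0 ≤ Real.sqrt γ := Real.sqrt_nonneg γ
  have hev : ∀ᶠ n : ℕ in atTop, 1 ≤ n ∧ a < (n:ℝ) := by
    filter_upwards [eventually_ge_atTop 1,
      (tendsto_natCast_atTop_atTop (R := ℝ)).eventually_gt_atTop a] with n h1 h2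
    exact ⟨h1, h2⟩
  have hinvn : Tendsto (fun n : ℕ => 1/(n:ℝ)) atTop (𝓝 0) := tendsto_one_div_atTop_nhds_zero_nat
  -- `1/(β n · n) → 0`
  have hβn : Tendsto (fun n : ℕ => (β n * (n:ℝ))⁻¹) atTop (𝓝 0) := by
    have hlog : Tendsto (fun n : ℕ => (Real.log (n:ℝ))⁻¹) atTop (𝓝 0) :=
      (Real.tendsto_log_atTop.comp tendsto_natCast_atTop_atTop).inv_tendsto_atTop
    have hmul := limlog.mul hlog
    rw [zero_mul] at hmul
    refine Tendsto.congr' ?_ hmul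
    filter_upwards [eventually_ge_atTop 2] with n hn
    have h2 : (1:ℝ) < (n:ℝ) := by exact_mod_cast Nat.lt_of_lt_of_le one_lt_two hn
    have hl : Real.log (n:ℝ) ≠ 0 := (Real.log_pos h2).ne'
    have hn0 : (0:ℝ) < (n:ℝ) := by linarith
    have hb : β n * (n:ℝ) ≠ 0 := (mul_pos (hβ n) hn0).ne'
    field_simp
  -- `n/(n-a) → 1`
  have hρ : Tendsto (fun n : ℕ => (n:ℝ)/((n:ℝ)-a)) atTop (𝓝 1) := by
    have h1 : Tendsto (fun n : ℕ => 1 - a*(1/(n:ℝ))) atTop (𝓝 1) := by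
      have h0 := hinvn.const_mul a
      have := (tendsto_const_nhds (α := ℕ) (f := atTop) (x := (1:ℝ))).sub h0
      simpa using this
    have h2 := h1.inv₀ (by norm_num)
    rw [inv_one] at h2
    refine Tendsto.congr' ?_ h2
    filter_upwards [hev] with n hn
    have hn0 : (0:ℝ) < (n:ℝ) := by exact_mod_cast hn.1
    have hna : ((n:ℝ) - a) ≠ 0 := sub_ne_zero.2 (ne_of_gt hn.2)
    rw [show 1 - a * (1/(n:ℝ)) = ((n:ℝ) - a)/(n:ℝ) by field_simp, inv_div]
  -- `(n-1)/(n-a) → 1`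
  have hρ' : Tendsto (fun n : ℕ => ((n:ℝ)-1)/((n:ℝ)-a)) atTop (𝓝 1) := by
    have h1 : Tendsto (fun n : ℕ => (1 - 1/(n:ℝ)) * ((n:ℝ)/((n:ℝ)-a))) atTop (𝓝 ((1-0)*1)) :=
      (tendsto_const_nhds.sub hinvn).mul hρ
    rw [show ((1:ℝ)-0)*1 = 1 by norm_num] at h1
    refine Tendsto.congr' ?_ h1
    filter_upwards [hev] with n hn
    have hn0 : ((n:ℝ)) ≠ 0 := by
      have : (0:ℝ) < (n:ℝ) := by exact_mod_cast hn.1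
      exact this.ne'
    have hna : ((n:ℝ) - a) ≠ 0 := sub_ne_zero.2 (ne_of_gt hn.2)
    field_simp
  have hinvp1 : Tendsto (fun n : ℕ => 1/((p1 n : ℕ):ℝ)) atTop (𝓝 0) := by
    refine squeeze_zero' (.of_forall (fun n => by positivity)) ?_ hinvn
    filter_upwards [hev] with n hn
    apply one_div_le_one_div_of_le
    · exact_mod_cast hn.1
    · exact_mod_cast hp1 n
  have hinvp2 : Tendsto (fun n : ℕ => 1/((p2 n : ℕ):ℝ)) atTop (𝓝 0) := by
    refine squeeze_zero' (.of_forall (fun n => by positivity)) ?_ hinvn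
    filter_upwards [hev] with n hn
    apply one_div_le_one_div_of_le
    · exact_mod_cast hn.1
    · exact_mod_cast hp2 n
  have hε : Tendsto (fun n : ℕ => (β n * ((n:ℝ)-a))⁻¹) atTop (𝓝 0) := by
    have h1 := hβn.mul hρ
    rw [zero_mul] at h1
    refine Tendsto.congr' ?_ h1
    filter_upwards [hev] with n hn
    have hn0 : ((n:ℝ)) ≠ 0 := by
      have : (0:ℝ) < (n:ℝ) := by exact_mod_cast hn.1
      exact this.ne'
    have hna : ((n:ℝ) - a) ≠ 0 := sub_ne_zero.2 (ne_of_gt hn.2)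
    have hbne : β n ≠ 0 := (hβ n).ne'
    field_simp
  -- scaling constants
  have hs1eq : ∀ n : ℕ, 1 ≤ n → sC n (p1 n) (p1 n) = Real.sqrt ((n:ℝ)/((p1 n : ℕ):ℝ)) := by
    intro n h1
    have hp : (0:ℝ) < ((p1 n : ℕ):ℝ) := by exact_mod_cast lt_of_lt_of_le h1 (hp1 n)
    unfold sC
    rw [show ((n:ℝ)/((p1 n : ℕ):ℝ)) = ((n:ℝ)*((p1 n : ℕ):ℝ))/(((p1 n : ℕ):ℝ))^2 by
      field_simp]
    rw [Real.sqrt_div (by positivity), Real.sqrt_sq hp.le]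
  have hs1 : Tendsto (fun n : ℕ => sC n (p1 n) (p1 n)) atTop (𝓝 (Real.sqrt γ)) := by
    have h1 : Tendsto (fun n : ℕ => Real.sqrt ((n:ℝ)/((p1 n : ℕ):ℝ))) atTop
        (𝓝 (Real.sqrt γ)) := (Real.continuous_sqrt.tendsto γ).comp limγ
    refine Tendsto.congr' ?_ h1
    filter_upwards [hev] with n hn
    exact (hs1eq n hn.1).symm
  have hs2eq : ∀ n : ℕ, 1 ≤ n →
      sC n (p1 n) (p2 n) = sC n (p1 n) (p1 n) * (((p1 n : ℕ):ℝ)/((p2 n : ℕ):ℝ)) := by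
    intro n h1
    have hp1' : (0:ℝ) < ((p1 n : ℕ):ℝ) := by exact_mod_cast lt_of_lt_of_le h1 (hp1 n)
    have hp2' : (0:ℝ) < ((p2 n : ℕ):ℝ) := by exact_mod_cast lt_of_lt_of_le h1 (hp2 n)
    unfold sC
    field_simp
  have hs2 : Tendsto (fun n : ℕ => sC n (p1 n) (p2 n)) atTop (𝓝 (Real.sqrt γ * σ)) := by
    have h1 := hs1.mul limσ
    refine Tendsto.congr' ?_ h1
    filter_upwards [hev] with n hn
    exact (hs2eq n hn.1).symm
  -- pointwise identities
  have keyB1 : ∀ n : ℕ, 1 ≤ n → a < (n:ℝ) →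
      (rExp (β n) n (p1 n) - a) / (β n * ((n:ℝ)-a)) * (sC n (p1 n) (p1 n))^2
        = ((1 - (n:ℝ)/((p1 n : ℕ):ℝ) + 1/((p1 n : ℕ):ℝ))/2) * ((n:ℝ)/((n:ℝ)-a))
          - a*((n:ℝ)/((p1 n : ℕ):ℝ))*(β n*((n:ℝ)-a))⁻¹ := by
    intro n h1 h2
    have hp : (0:ℝ) < ((p1 n : ℕ):ℝ) := by exact_mod_cast lt_of_lt_of_le h1 (hp1 n)
    have hsq : (sC n (p1 n) (p1 n))^2 = (n:ℝ)/((p1 n : ℕ):ℝ) := by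
      rw [hs1eq n h1, Real.sq_sqrt (by positivity)]
    rw [hsq]
    have hna : ((n:ℝ) - a) ≠ 0 := sub_ne_zero.2 (ne_of_gt h2)
    have hbne : β n ≠ 0 := (hβ n).ne'
    exact aux_keyB1 (β n) ((p1 n : ℕ):ℝ) (n:ℝ) a hbne hp.ne' hna
  have keyB2 : ∀ n : ℕ, 1 ≤ n → a < (n:ℝ) →
      (rExp (β n) n (p2 n) - a) / (β n * ((n:ℝ)-a)) * (sC n (p1 n) (p2 n))^2
        = ((1 - ((n:ℝ)/((p1 n : ℕ):ℝ))*(((p1 n : ℕ):ℝ)/((p2 n : ℕ):ℝ)) + 1/((p2 n : ℕ):ℝ))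
              *(((p1 n : ℕ):ℝ)/((p2 n : ℕ):ℝ))/2) * ((n:ℝ)/((n:ℝ)-a))
          - a*((n:ℝ)/((p1 n : ℕ):ℝ))*(((p1 n : ℕ):ℝ)/((p2 n : ℕ):ℝ))^2*(β n*((n:ℝ)-a))⁻¹ := by
    intro n h1 h2
    have hp1' : (0:ℝ) < ((p1 n : ℕ):ℝ) := by exact_mod_cast lt_of_lt_of_le h1 (hp1 n)
    have hp2' : (0:ℝ) < ((p2 n : ℕ):ℝ) := by exact_mod_cast lt_of_lt_of_le h1 (hp2 n)
    have hsq : (sC n (p1 n) (p2 n))^2 = (n:ℝ)*((p1 n : ℕ):ℝ)/(((p2 n : ℕ):ℝ))^2 := by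
      unfold sC
      rw [div_pow, Real.sq_sqrt (by positivity)]
    rw [hsq]
    have hna : ((n:ℝ) - a) ≠ 0 := sub_ne_zero.2 (ne_of_gt h2)
    have hbne : β n ≠ 0 := (hβ n).ne'
    exact aux_keyB2 (β n) ((p1 n : ℕ):ℝ) ((p2 n : ℕ):ℝ) (n:ℝ) a hbne hp1'.ne' hp2'.ne' hna
  have keyA : ∀ n : ℕ, 1 ≤ n → a < (n:ℝ) →
      (rExp (β n) n (p1 n) - a) / (β n * ((n:ℝ)-a)) * (sC n (p1 n) (p1 n))
        - (rExp (β n) n (p2 n) - a) / (β n * ((n:ℝ)-a)) * (sC n (p1 n) (p2 n))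
      = sC n (p1 n) (p1 n) * ((((n:ℝ)-1)/((n:ℝ)-a)) * ((((p1 n : ℕ):ℝ)/((p2 n : ℕ):ℝ) - 1)/2))
        - a*(sC n (p1 n) (p1 n) - sC n (p1 n) (p2 n))*(β n*((n:ℝ)-a))⁻¹ := by
    intro n h1 h2
    have hp1' : (0:ℝ) < ((p1 n : ℕ):ℝ) := by exact_mod_cast lt_of_lt_of_le h1 (hp1 n)
    have hp2' : (0:ℝ) < ((p2 n : ℕ):ℝ) := by exact_mod_cast lt_of_lt_of_le h1 (hp2 n)
    have hna : ((n:ℝ) - a) ≠ 0 := sub_ne_zero.2 (ne_of_gt h2)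
    have hbne : β n ≠ 0 := (hβ n).ne'
    rw [hs2eq n h1]
    have key := aux_key (β n) ((p1 n : ℕ):ℝ) ((p2 n : ℕ):ℝ) (n:ℝ) a hbne hp2'.ne' hna
    unfold rExp
    linear_combination (sC n (p1 n) (p1 n)) * key
  -- component limits
  have hB1 : Tendsto (fun n : ℕ =>
      (rExp (β n) n (p1 n) - a) / (β n * ((n:ℝ)-a)) * (sC n (p1 n) (p1 n))^2)
      atTop (𝓝 ((1-γ)/2)) := by
    have main : Tendsto (fun n : ℕ =>
        ((1 - (n:ℝ)/((p1 n : ℕ):ℝ) + 1/((p1 n : ℕ):ℝ))/2) * ((n:ℝ)/((n:ℝ)-a))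
          - a*((n:ℝ)/((p1 n : ℕ):ℝ))*(β n*((n:ℝ)-a))⁻¹)
        atTop (𝓝 (((1-γ+0)/2)*1 - a*γ*0)) :=
      ((((tendsto_const_nhds.sub limγ).add hinvp1).div_const 2).mul hρ).sub
        ((limγ.const_mul a).mul hε)
    rw [show ((1-γ+0)/2)*1 - a*γ*0 = (1-γ)/2 by ring] at main
    refine Tendsto.congr' ?_ main
    filter_upwards [hev] with n hn
    exact (keyB1 n hn.1 hn.2).symm
  have hB2 : Tendsto (fun n : ℕ =>
      (rExp (β n) n (p2 n) - a) / (β n * ((n:ℝ)-a)) * (sC n (p1 n) (p2 n))^2)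
      atTop (𝓝 (σ*(1-γ*σ)/2)) := by
    have main : Tendsto (fun n : ℕ =>
        ((1 - ((n:ℝ)/((p1 n : ℕ):ℝ))*(((p1 n : ℕ):ℝ)/((p2 n : ℕ):ℝ)) + 1/((p2 n : ℕ):ℝ))
              *(((p1 n : ℕ):ℝ)/((p2 n : ℕ):ℝ))/2) * ((n:ℝ)/((n:ℝ)-a))
          - a*((n:ℝ)/((p1 n : ℕ):ℝ))*(((p1 n : ℕ):ℝ)/((p2 n : ℕ):ℝ))^2*(β n*((n:ℝ)-a))⁻¹)
        atTop (𝓝 (((1 - γ*σ + 0)*σ/2)*1 - a*γ*σ^2*0)) :=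
      (((((tendsto_const_nhds.sub (limγ.mul limσ)).add hinvp2).mul limσ).div_const 2).mul hρ).sub
        (((limγ.const_mul a).mul (limσ.pow 2)).mul hε)
    rw [show ((1 - γ*σ + 0)*σ/2)*1 - a*γ*σ^2*0 = σ*(1-γ*σ)/2 by ring] at main
    refine Tendsto.congr' ?_ main
    filter_upwards [hev] with n hn
    exact (keyB2 n hn.1 hn.2).symm
  have hAx : Tendsto (fun n : ℕ =>
      (rExp (β n) n (p1 n) - a) / (β n * ((n:ℝ)-a)) * (sC n (p1 n) (p1 n))
        - (rExp (β n) n (p2 n) - a) / (β n * ((n:ℝ)-a)) * (sC n (p1 n) (p2 n)))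
      atTop (𝓝 (Real.sqrt γ * (σ-1)/2)) := by
    have main : Tendsto (fun n : ℕ =>
        sC n (p1 n) (p1 n) * ((((n:ℝ)-1)/((n:ℝ)-a)) * ((((p1 n : ℕ):ℝ)/((p2 n : ℕ):ℝ) - 1)/2))
          - a*(sC n (p1 n) (p1 n) - sC n (p1 n) (p2 n))*(β n*((n:ℝ)-a))⁻¹)
        atTop (𝓝 (Real.sqrt γ * (1*((σ-1)/2)) - a*(Real.sqrt γ - Real.sqrt γ * σ)*0)) :=
      (hs1.mul (hρ'.mul ((limσ.sub tendsto_const_nhds).div_const 2))).sub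
        (((hs1.sub hs2).const_mul a).mul hε)
    rw [show Real.sqrt γ * (1*((σ-1)/2)) - a*(Real.sqrt γ - Real.sqrt γ * σ)*0
        = Real.sqrt γ * (σ-1)/2 by ring] at main
    refine Tendsto.congr' ?_ main
    filter_upwards [hev] with n hn
    exact (keyA n hn.1 hn.2).symm
  -- convergence of the parameter vector
  have hv : Tendsto (fun n : ℕ =>
      (((rExp (β n) n (p1 n) - a) / (β n * ((n:ℝ)-a)) * (sC n (p1 n) (p1 n))
          - (rExp (β n) n (p2 n) - a) / (β n * ((n:ℝ)-a)) * (sC n (p1 n) (p2 n)),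
        (rExp (β n) n (p1 n) - a) / (β n * ((n:ℝ)-a)) * (sC n (p1 n) (p1 n))^2,
        (rExp (β n) n (p2 n) - a) / (β n * ((n:ℝ)-a)) * (sC n (p1 n) (p2 n))^2,
        sC n (p1 n) (p1 n), sC n (p1 n) (p2 n)) : ℝ×ℝ×ℝ×ℝ×ℝ)) atTop
      (𝓝 ((Real.sqrt γ * (σ-1)/2, (1-γ)/2, σ*(1-γ*σ)/2, Real.sqrt γ, Real.sqrt γ * σ) :
        ℝ×ℝ×ℝ×ℝ×ℝ)) :=
    hAx.prodMk_nhds (hB1.prodMk_nhds (hB2.prodMk_nhds (hs1.prodMk_nhds hs2)))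
  -- the limit point lies in the continuity domain
  have hsub : ∀ x ∈ Set.Icc (-L) M,
      ((((Real.sqrt γ * (σ-1)/2, (1-γ)/2, σ*(1-γ*σ)/2, Real.sqrt γ, Real.sqrt γ * σ) :
        ℝ×ℝ×ℝ×ℝ×ℝ), x) : (ℝ×ℝ×ℝ×ℝ×ℝ) × ℝ) ∈ auxU := by
    intro x hx
    have hxl : -L ≤ x := hx.1
    have hxm : x ≤ M := hx.2
    have h1 : Real.sqrt γ * L < 1 := by
      rcases hγ0.lt_or_eq with hγp | hγe
      · have ht1p : 0 < Real.sqrt γ := Real.sqrt_pos.2 hγp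
        have hL' : L < 1/Real.sqrt γ := by have := hL hγp; linarith
        calc Real.sqrt γ * L < Real.sqrt γ * (1/Real.sqrt γ) :=
              mul_lt_mul_of_pos_left hL' ht1p
          _ = 1 := by field_simp
      · rw [← hγe, Real.sqrt_zero, zero_mul]; norm_num
    have h2 : Real.sqrt γ * σ * M < 1 := by
      by_cases hgs : 0 < γ * σ
      · have hγp : 0 < γ := by
          rcases hγ0.lt_or_eq with h | h
          · exact h
          · exfalso; rw [← h] at hgs; simp at hgs
        have hσp : 0 < σ := by
          rcases hσ.lt_or_eq with h | h
          · exact h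
          · exfalso; rw [← h] at hgs; simp at hgs
        have htp : 0 < Real.sqrt γ * σ := mul_pos (Real.sqrt_pos.2 hγp) hσp
        calc Real.sqrt γ * σ * M < Real.sqrt γ * σ * (1/(Real.sqrt γ * σ)) :=
              mul_lt_mul_of_pos_left (hM hgs) htp
          _ = 1 := by field_simp
      · have h0 : γ * σ = 0 := le_antisymm (not_lt.1 hgs) (mul_nonneg hγ0 hσ)
        rcases mul_eq_zero.1 h0 with h | h
        · rw [h, Real.sqrt_zero, zero_mul, zero_mul]; norm_num
        · rw [h, mul_zero, zero_mul]; norm_num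
    refine ⟨?_, ?_⟩
    · show (0:ℝ) < 1 + Real.sqrt γ * x
      nlinarith [mul_le_mul_of_nonneg_left hxl ht1nn]
    · show (0:ℝ) < 1 - Real.sqrt γ * σ * x
      have hts : 0 ≤ Real.sqrt γ * σ := mul_nonneg ht1nn hσ
      nlinarith [mul_le_mul_of_nonneg_left hxm hts]
  -- apply the uniform-convergence-in-parameter lemma
  have main := tendstoUniformlyOn_param (E := ℝ×ℝ×ℝ×ℝ×ℝ) auxU_open auxG_continuousOn hv
    isCompact_Icc hsub
  have hlim : (fun x => auxG
      (((Real.sqrt γ * (σ-1)/2, (1-γ)/2, σ*(1-γ*σ)/2, Real.sqrt γ, Real.sqrt γ * σ) :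
        ℝ×ℝ×ℝ×ℝ×ℝ), x)) = phiLim γ σ := by
    funext x
    exact (phiLim_eq_decomp γ σ hγ0 hσ x).symm
  rw [hlim] at main
  refine main.congr ?_
  filter_upwards [hev] with n hn
  intro x hx
  have hp1' : (0:ℝ) < ((p1 n : ℕ):ℝ) := by exact_mod_cast lt_of_lt_of_le hn.1 (hp1 n)
  have hp2' : (0:ℝ) < ((p2 n : ℕ):ℝ) := by exact_mod_cast lt_of_lt_of_le hn.1 (hp2 n)
  have hn0 : (0:ℝ) < (n:ℝ) := by exact_mod_cast hn.1
  have hs1ne : sC n (p1 n) (p1 n) ≠ 0 :=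
    (div_pos (Real.sqrt_pos.2 (by positivity)) hp1').ne'
  have hs2ne : sC n (p1 n) (p2 n) ≠ 0 :=
    (div_pos (Real.sqrt_pos.2 (by positivity)) hp2').ne'
  exact (log_decomp ((rExp (β n) n (p1 n) - a) / (β n * ((n:ℝ)-a)))
    ((rExp (β n) n (p2 n) - a) / (β n * ((n:ℝ)-a)))
    (sC n (p1 n) (p1 n)) (sC n (p1 n) (p2 n)) x hs1ne hs2ne).symm

end BetaJacobiLDP
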